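/- Let A be a symmetric real n×n matrix with rows and columns indexed by {0, 1, …, n−1}. For real t ≠ 0 define D(t) = det((t + t⁻¹)·I − A) and h_k(t) = (adj((t + t⁻¹)·I − A))_{0k}. Then for every real x ≠ 0, with ' denoting the derivative with respect to x: D'(x)·h₀(x) − D(x)·h₀'(x) = (1 − x⁻²)·Σ_{k=0}^{n−1} h_k(x)². -/

import Mathlib

open Matrix Finset Polynomial

/-- The Wronskian identity (19) of Proposition 2, in cofactor form for a symmetric
real matrix `A` on `n + 1` indices (index `0` distinguished): with
`D t = det((t + t⁻¹)·I - A)` and `h t k = adj((t + t⁻¹)·I - A)_{0k}`, for `x ≠ 0`,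
`D'(x)·h₀(x) - D(x)·h₀'(x) = (1 - x⁻²)·Σ_k h_k(x)²`. -/
theorem symmetric_wronskian_identity (n : ℕ)
    (A : Matrix (Fin (n + 1)) (Fin (n + 1)) ℝ) (hsymm : Aᵀ = A)
    (D : ℝ → ℝ)
    (hD : ∀ t, D t = ((t + t⁻¹) • (1 : Matrix (Fin (n + 1)) (Fin (n + 1)) ℝ) - A).det)
    (h : ℝ → Fin (n + 1) → ℝ)
    (hh : ∀ t k, h t k =
      ((t + t⁻¹) • (1 : Matrix (Fin (n + 1)) (Fin (n + 1)) ℝ) - A).adjugate 0 k)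
    (x : ℝ) (hx : x ≠ 0) :
    deriv D x * h x 0 - D x * deriv (fun t => h t 0) x
      = (1 - (x⁻¹) ^ 2) * ∑ k : Fin (n + 1), (h x k) ^ 2 := by
  set M : Matrix (Fin (n+1)) (Fin (n+1)) ℝ[X] := charmatrix A with hM
  set B : Matrix (Fin (n+1)) (Fin (n+1)) ℝ[X] := M.adjugate with hB
  set p : ℝ[X] := M.det with hp
  -- evaluation of charmatrix
  have hmap : ∀ t : ℝ, M.map ⇑(evalRingHom t) = t • (1 : Matrix (Fin (n+1)) (Fin (n+1)) ℝ) - A := by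
    intro t
    ext i j
    by_cases hij : i = j
    · subst hij
      simp [hM, charmatrix_apply_eq, Matrix.smul_apply, Matrix.one_apply]
    · simp [hM, charmatrix_apply_ne _ _ _ hij, Matrix.smul_apply, Matrix.one_apply, hij]
  -- D and h as polynomial evaluations
  have hDt : ∀ t : ℝ, D t = p.eval (t + t⁻¹) := by
    intro t
    rw [hD t, hp, ← hmap (t + t⁻¹)]
    exact (RingHom.map_det (evalRingHom (t + t⁻¹)) M).symm
  have hht : ∀ (t : ℝ) k, h t k = (B 0 k).eval (t + t⁻¹) := by
    intro t k
    have hadj := RingHom.map_adjugate (evalRingHom (t + t⁻¹)) M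
    rw [RingHom.mapMatrix_apply, RingHom.mapMatrix_apply] at hadj
    rw [hh t k, ← hmap (t + t⁻¹), ← hadj]
    rfl
  -- symmetry of B
  have hMsymm : Mᵀ = M := by
    ext i j
    by_cases hij : i = j
    · subst hij; rfl
    · rw [Matrix.transpose_apply, hM, charmatrix_apply_ne _ _ _ hij,
        charmatrix_apply_ne _ _ _ (Ne.symm hij)]
      have : A j i = A i j := (congrFun (congrFun hsymm j) i).symm ▸ rfl
      exact this ▸ rfl
  have hBsymm : ∀ i j, B i j = B j i := by
    intro i j
    have := adjugate_transpose M
    rw [hMsymm] at this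
    calc B i j = Bᵀ j i := rfl
    _ = B j i := by rw [hB, this]
  -- derivative of charmatrix entries
  have hM' : ∀ j k, derivative (M j k) = if j = k then 1 else 0 := by
    intro j k
    by_cases hjk : j = k
    · subst hjk; simp [hM, charmatrix_apply_eq]
    · simp [hM, charmatrix_apply_ne _ _ _ hjk, hjk]
  -- key matrix identity: p • B' + B*B = p' • B  (entry 0 0)
  have hBM : B * M = p • (1 : Matrix (Fin (n+1)) (Fin (n+1)) ℝ[X]) := adjugate_mul M
  have hMB : M * B = p • (1 : Matrix (Fin (n+1)) (Fin (n+1)) ℝ[X]) := mul_adjugate M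
  have step1 : B.map (⇑derivative) * M + B
      = (derivative p) • (1 : Matrix (Fin (n+1)) (Fin (n+1)) ℝ[X]) := by
    ext i j
    have h1 : derivative ((B * M) i j)
        = (B.map (⇑derivative) * M) i j + B i j := by
      rw [Matrix.mul_apply]
      rw [derivative_sum]
      have : ∀ l ∈ Finset.univ, derivative (B i l * M l j)
          = (derivative (B i l)) * M l j + B i l * (if l = j then 1 else 0) := by
        intro l _
        rw [derivative_mul, hM' l j]
      rw [Finset.sum_congr rfl this, Finset.sum_add_distrib]
      simp [Matrix.mul_apply, Matrix.map_apply, mul_ite, mul_one, mul_zero,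
        Finset.sum_ite_eq']
    rw [Matrix.add_apply, ← h1, hBM]
    by_cases hij : i = j
    · subst hij; simp [Matrix.smul_apply, Matrix.one_apply]
    · simp [Matrix.smul_apply, Matrix.one_apply, hij]
  have step2 : p • B.map (⇑derivative) + B * B = (derivative p) • B := by
    calc p • B.map (⇑derivative) + B * B
        = B.map (⇑derivative) * (M * B) + B * B := by rw [hMB, Matrix.mul_smul, Matrix.mul_one]
      _ = (B.map (⇑derivative) * M + B) * B := by rw [Matrix.add_mul, Matrix.mul_assoc]
      _ = (derivative p) • B := by rw [step1, Matrix.smul_mul, Matrix.one_mul]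
  have key : p * derivative (B 0 0) + ∑ k, B 0 k * B 0 k = derivative p * B 0 0 := by
    have := congrArg (fun N => N 0 0) step2
    simp only [Matrix.add_apply, Matrix.smul_apply, Matrix.mul_apply, Matrix.map_apply,
      smul_eq_mul] at this
    rw [← this]
    congr 1
    exact Finset.sum_congr rfl fun k _ => by rw [hBsymm 0 k]
  -- derivatives
  set z : ℝ := x + x⁻¹ with hz
  have hzd : HasDerivAt (fun t : ℝ => t + t⁻¹) (1 - (x⁻¹)^2) x := by
    have h1 := (hasDerivAt_id x).add (hasDerivAt_inv hx)
    have h2 : (1:ℝ) + -(x^2)⁻¹ = 1 - (x⁻¹)^2 := by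
      rw [inv_pow]
      ring
    rw [h2] at h1
    exact h1
  have hDd : HasDerivAt D ((derivative p).eval z * (1 - (x⁻¹)^2)) x := by
    have := (p.hasDerivAt z).comp x hzd
    apply this.congr_of_eventuallyEq
    filter_upwards with t
    exact hDt t
  have hhd : HasDerivAt (fun t => h t 0)
      ((derivative (B 0 0)).eval z * (1 - (x⁻¹)^2)) x := by
    have := ((B 0 0).hasDerivAt z).comp x hzd
    apply this.congr_of_eventuallyEq
    filter_upwards with t
    exact hht t 0
  rw [hDd.deriv, hhd.deriv, hDt x, hht x 0]
  have hkey := congrArg (Polynomial.eval z) key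
  simp only [eval_add, eval_mul, eval_finset_sum] at hkey
  have hsum : ∀ k ∈ Finset.univ, h x k ^ 2 = (B 0 k).eval z * (B 0 k).eval z := by
    intro k _
    rw [hht x k, ← hz]; ring
  rw [Finset.sum_congr rfl hsum]
  nlinarith [hkey]
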